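/- Under the hypotheses of the previous setting (Haar-random $U \in \mathbb{U}(N)$, $C_0$ a rank-$m$ Hermitian projection, $\Pi_A$ the projection onto the first $N_A$ coordinates), the Haar average satisfies $\int dU\, \mathrm{Tr}\big[(\Pi_A U C_0 U^\dagger \Pi_A^\dagger)^2\big] = \frac{Nm - m^2}{N(N^2-1)} N_A^2 + \frac{Nm^2 - m}{N(N^2-1)} N_A$. -/

import Mathlib

open MeasureTheory Matrix

noncomputable section

instance matrixMeasurableSpace (m n : Type*) : MeasurableSpace (Matrix m n ℂ) :=
  inferInstanceAs (MeasurableSpace (m → n → ℂ))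

/-- The `N_A × N` matrix projecting onto the first `N_A` coordinates. -/
def projA (NA N : ℕ) : Matrix (Fin NA) (Fin N) ℂ :=
  Matrix.of fun i j => if (i : ℕ) = (j : ℕ) then 1 else 0

namespace S2aux

variable {N : ℕ}

def X (C0 : Matrix (Fin N) (Fin N) ℂ) (U : Matrix.unitaryGroup (Fin N) ℂ) :
    Matrix (Fin N) (Fin N) ℂ :=
  (U : Matrix (Fin N) (Fin N) ℂ) * C0 * (U : Matrix (Fin N) (Fin N) ℂ)ᴴ

def Iv (μ : Measure (Matrix.unitaryGroup (Fin N) ℂ)) (C0 : Matrix (Fin N) (Fin N) ℂ)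
    (a b c d : Fin N) : ℂ :=
  ∫ U, X C0 U a b * X C0 U c d ∂μ

lemma X_mul (C0 : Matrix (Fin N) (Fin N) ℂ) (V U : Matrix.unitaryGroup (Fin N) ℂ) :
    X C0 (V * U) = (V : Matrix (Fin N) (Fin N) ℂ) * X C0 U * (V : Matrix (Fin N) (Fin N) ℂ)ᴴ := by
  simp only [X, Submonoid.coe_mul, conjTranspose_mul]
  noncomm_ring

lemma meas_entry (C0 : Matrix (Fin N) (Fin N) ℂ) (a b : Fin N) :
    Measurable fun U : Matrix.unitaryGroup (Fin N) ℂ => X C0 U a b := by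
  have hU : ∀ i j : Fin N, Measurable fun U : Matrix.unitaryGroup (Fin N) ℂ =>
      (U : Matrix (Fin N) (Fin N) ℂ) i j := by
    intro i j
    exact (measurable_pi_apply j).comp ((measurable_pi_apply i).comp measurable_subtype_coe)
  simp only [X, Matrix.mul_apply, conjTranspose_apply]
  apply Finset.measurable_sum
  intro q _
  apply Measurable.mul
  · apply Finset.measurable_sum
    intro p _
    exact (hU a p).mul_const _
  · exact (Complex.continuous_conj.measurable).comp (hU b q)

lemma entry_bound (U : Matrix.unitaryGroup (Fin N) ℂ) (i j : Fin N) :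
    ‖(U : Matrix (Fin N) (Fin N) ℂ) i j‖ ≤ 1 := by
  have h : (U : Matrix (Fin N) (Fin N) ℂ) * (U : Matrix (Fin N) (Fin N) ℂ)ᴴ = 1 := by
    have := U.2
    rw [Matrix.mem_unitaryGroup_iff] at this
    simpa [Matrix.star_eq_conjTranspose] using this
  have hii : (((U : Matrix (Fin N) (Fin N) ℂ) * (U : Matrix (Fin N) (Fin N) ℂ)ᴴ) i i) = 1 := by
    rw [h]; simp
  rw [Matrix.mul_apply] at hii
  simp only [conjTranspose_apply] at hii
  have hsum : (∑ k, Complex.normSq ((U : Matrix (Fin N) (Fin N) ℂ) i k) : ℝ) = 1 := by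
    have := congrArg Complex.re hii
    simpa [Complex.mul_conj] using this
  have hle : Complex.normSq ((U : Matrix (Fin N) (Fin N) ℂ) i j) ≤ 1 := by
    rw [← hsum]
    exact Finset.single_le_sum (f := fun k => Complex.normSq ((U : Matrix (Fin N) (Fin N) ℂ) i k))
      (fun k _ => Complex.normSq_nonneg _) (Finset.mem_univ j)
  have hsq : ‖(U : Matrix (Fin N) (Fin N) ℂ) i j‖ ^ 2 ≤ 1 := by
    rw [Complex.sq_norm]; exact hle
  nlinarith [norm_nonneg ((U : Matrix (Fin N) (Fin N) ℂ) i j)]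

lemma X_bound (C0 : Matrix (Fin N) (Fin N) ℂ) (U : Matrix.unitaryGroup (Fin N) ℂ) (a b : Fin N) :
    ‖X C0 U a b‖ ≤ ∑ p, ∑ q, ‖C0 p q‖ := by
  simp only [X, Matrix.mul_apply, conjTranspose_apply]
  calc ‖∑ q, (∑ p, (U : Matrix (Fin N) (Fin N) ℂ) a p * C0 p q) *
        (starRingEnd ℂ) ((U : Matrix (Fin N) (Fin N) ℂ) b q)‖
      ≤ ∑ q, ‖(∑ p, (U : Matrix (Fin N) (Fin N) ℂ) a p * C0 p q) *
        (starRingEnd ℂ) ((U : Matrix (Fin N) (Fin N) ℂ) b q)‖ := norm_sum_le _ _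
    _ ≤ ∑ q, ∑ p, ‖C0 p q‖ := by
        apply Finset.sum_le_sum
        intro q _
        rw [norm_mul]
        calc ‖∑ p, (U : Matrix (Fin N) (Fin N) ℂ) a p * C0 p q‖ *
              ‖(starRingEnd ℂ) ((U : Matrix (Fin N) (Fin N) ℂ) b q)‖
            ≤ ‖∑ p, (U : Matrix (Fin N) (Fin N) ℂ) a p * C0 p q‖ * 1 := by
              apply mul_le_mul_of_nonneg_left _ (norm_nonneg _)
              simpa using entry_bound U b q
          _ ≤ ∑ p, ‖C0 p q‖ := by
              rw [mul_one]
              refine le_trans (norm_sum_le _ _) (Finset.sum_le_sum ?_)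
              intro p _
              rw [norm_mul]
              calc ‖(U : Matrix (Fin N) (Fin N) ℂ) a p‖ * ‖C0 p q‖
                  ≤ 1 * ‖C0 p q‖ :=
                    mul_le_mul_of_nonneg_right (entry_bound U a p) (norm_nonneg _)
                _ = ‖C0 p q‖ := one_mul _
    _ = ∑ p, ∑ q, ‖C0 p q‖ := Finset.sum_comm

lemma integrable_prod (μ : Measure (Matrix.unitaryGroup (Fin N) ℂ)) [IsProbabilityMeasure μ]
    (C0 : Matrix (Fin N) (Fin N) ℂ) (a b c d : Fin N) :
    Integrable (fun U : Matrix.unitaryGroup (Fin N) ℂ => X C0 U a b * X C0 U c d) μ := by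
  set K := ∑ p, ∑ q, ‖C0 p q‖ with hK
  refine Integrable.mono' (integrable_const (K * K)) ?_ ?_
  · exact ((meas_entry C0 a b).mul (meas_entry C0 c d)).aestronglyMeasurable
  · refine Filter.Eventually.of_forall fun U => ?_
    rw [norm_mul]
    have h1 := X_bound C0 U a b
    have h2 := X_bound C0 U c d
    exact mul_le_mul h1 h2 (norm_nonneg _) (le_trans (norm_nonneg _) h1)

lemma meas_mulV (V : Matrix.unitaryGroup (Fin N) ℂ) :
    Measurable fun U : Matrix.unitaryGroup (Fin N) ℂ => V * U := by
  apply Measurable.subtype_mk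
  have h1 : Measurable fun A : Matrix (Fin N) (Fin N) ℂ => (V : Matrix (Fin N) (Fin N) ℂ) * A := by
    apply measurable_pi_lambda
    intro i
    apply measurable_pi_lambda
    intro j
    simp only [Matrix.mul_apply]
    refine Finset.measurable_sum _ fun k _ => ?_
    have hA : Measurable fun A : Matrix (Fin N) (Fin N) ℂ => A k j :=
      (measurable_pi_apply j).comp (measurable_pi_apply k)
    exact hA.const_mul _
  exact h1.comp measurable_subtype_coe

lemma Iv_inv (μ : Measure (Matrix.unitaryGroup (Fin N) ℂ))
    (hinv : ∀ V : Matrix.unitaryGroup (Fin N) ℂ, Measure.map (fun U => V * U) μ = μ)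
    (C0 : Matrix (Fin N) (Fin N) ℂ) (V : Matrix.unitaryGroup (Fin N) ℂ) (a b c d : Fin N) :
    Iv μ C0 a b c d =
      ∫ U, ((V : Matrix (Fin N) (Fin N) ℂ) * X C0 U * (V : Matrix (Fin N) (Fin N) ℂ)ᴴ) a b *
           ((V : Matrix (Fin N) (Fin N) ℂ) * X C0 U * (V : Matrix (Fin N) (Fin N) ℂ)ᴴ) c d ∂μ := by
  have h1 : Iv μ C0 a b c d = ∫ U, X C0 U a b * X C0 U c d ∂(Measure.map (fun U => V * U) μ) := by
    rw [hinv V]; rfl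
  rw [h1, integral_map (meas_mulV V).aemeasurable]
  · simp only [X_mul]
  · exact ((meas_entry C0 a b).mul (meas_entry C0 c d)).aestronglyMeasurable

/-- permutation invariance -/
lemma Iv_perm (μ : Measure (Matrix.unitaryGroup (Fin N) ℂ))
    (hinv : ∀ V : Matrix.unitaryGroup (Fin N) ℂ, Measure.map (fun U => V * U) μ = μ)
    (C0 : Matrix (Fin N) (Fin N) ℂ) (σ : Equiv.Perm (Fin N)) (a b c d : Fin N) :
    Iv μ C0 a b c d = Iv μ C0 (σ a) (σ b) (σ c) (σ d) := by
  classical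
  set P : Matrix (Fin N) (Fin N) ℂ := σ.toPEquiv.toMatrix with hP
  have hPH : Pᴴ = (σ⁻¹).toPEquiv.toMatrix := by
    ext i j
    simp only [hP, PEquiv.toMatrix_apply, Equiv.toPEquiv_apply, conjTranspose_apply,
      Option.mem_def, Option.some.injEq, apply_ite (starRingEnd ℂ), _root_.map_one, _root_.map_zero]
    by_cases h : j = σ⁻¹ i
    · simp [h]
    · have h2 : ¬ σ j = i := fun hc => h (by rw [← hc]; simp)
      have h3 : ¬ σ⁻¹ i = j := fun hc => h hc.symm
      simp [h, h2, h3]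
      exact h3
  have hmem : P ∈ Matrix.unitaryGroup (Fin N) ℂ := by
    rw [Matrix.mem_unitaryGroup_iff]
    rw [Matrix.star_eq_conjTranspose, hPH, hP, ← PEquiv.toMatrix_trans, ← Equiv.toPEquiv_trans]
    rw [show σ.trans σ⁻¹ = Equiv.refl (Fin N) from Equiv.self_trans_symm σ]
    rw [Equiv.toPEquiv_refl, PEquiv.toMatrix_refl]
  set V : Matrix.unitaryGroup (Fin N) ℂ := ⟨P, hmem⟩ with hV
  have hconj : ∀ (Y : Matrix (Fin N) (Fin N) ℂ) (i j : Fin N),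
      (P * Y * Pᴴ) i j = Y (σ i) (σ j) := by
    intro Y i j
    rw [hPH, hP, PEquiv.toMatrix_toPEquiv_mul, PEquiv.mul_toMatrix_toPEquiv]
    simp [Equiv.Perm.inv_def]
  have := Iv_inv μ hinv C0 V a b c d
  rw [this]
  unfold Iv
  congr 1
  funext U
  rw [show ((V : Matrix (Fin N) (Fin N) ℂ)) = P from rfl]
  rw [hconj (X C0 U) a b, hconj (X C0 U) c d]

lemma Iv_phase (μ : Measure (Matrix.unitaryGroup (Fin N) ℂ))
    (hinv : ∀ V : Matrix.unitaryGroup (Fin N) ℂ, Measure.map (fun U => V * U) μ = μ)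
    (C0 : Matrix (Fin N) (Fin N) ℂ) (p : Fin N) (a b c d : Fin N) :
    Iv μ C0 a b c d =
      ((if a = p then Complex.I else 1) * star (if b = p then Complex.I else 1) *
       (if c = p then Complex.I else 1) * star (if d = p then Complex.I else 1)) *
        Iv μ C0 a b c d := by
  classical
  set dv : Fin N → ℂ := fun q => if q = p then Complex.I else 1 with hdv
  have hunit : ∀ q, dv q * star (dv q) = 1 := by
    intro q
    by_cases h : q = p <;> simp [hdv, h, Complex.mul_conj, Complex.normSq_I]
  have hmem : diagonal dv ∈ Matrix.unitaryGroup (Fin N) ℂ := by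
    rw [Matrix.mem_unitaryGroup_iff, Matrix.star_eq_conjTranspose, diagonal_conjTranspose,
      diagonal_mul_diagonal]
    convert Matrix.diagonal_one using 2
    funext q
    exact hunit q
  set V : Matrix.unitaryGroup (Fin N) ℂ := ⟨diagonal dv, hmem⟩ with hV
  have hconj : ∀ (Y : Matrix (Fin N) (Fin N) ℂ) (i j : Fin N),
      ((V : Matrix (Fin N) (Fin N) ℂ) * Y * (V : Matrix (Fin N) (Fin N) ℂ)ᴴ) i j =
        dv i * Y i j * star (dv j) := by
    intro Y i j
    rw [show ((V : Matrix (Fin N) (Fin N) ℂ)) = diagonal dv from rfl, diagonal_conjTranspose]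
    rw [Matrix.mul_diagonal, Matrix.diagonal_mul]
    simp [Pi.star_apply]
  have : (fun U => ((V : Matrix (Fin N) (Fin N) ℂ) * X C0 U * (V : Matrix (Fin N) (Fin N) ℂ)ᴴ) a b *
           ((V : Matrix (Fin N) (Fin N) ℂ) * X C0 U * (V : Matrix (Fin N) (Fin N) ℂ)ᴴ) c d) =
      fun U => ((dv a * star (dv b)) * (dv c * star (dv d))) * (X C0 U a b * X C0 U c d) := by
    funext U
    rw [hconj, hconj]
    ring
  conv_lhs => rw [Iv_inv μ hinv C0 V a b c d]
  rw [this, integral_const_mul]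
  show ((dv a * star (dv b)) * (dv c * star (dv d))) * Iv μ C0 a b c d = _
  simp only [hdv]
  ring

/-- vanishing of unbalanced moments -/
lemma Iv_zero (μ : Measure (Matrix.unitaryGroup (Fin N) ℂ))
    (hinv : ∀ V : Matrix.unitaryGroup (Fin N) ℂ, Measure.map (fun U => V * U) μ = μ)
    (C0 : Matrix (Fin N) (Fin N) ℂ) (p : Fin N) (a b c d : Fin N)
    (hw : ((if a = p then Complex.I else 1) * star (if b = p then Complex.I else 1) *
       (if c = p then Complex.I else 1) * star (if d = p then Complex.I else 1)) ≠ 1) :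
    Iv μ C0 a b c d = 0 := by
  have h := Iv_phase μ hinv C0 p a b c d
  set w := ((if a = p then Complex.I else 1) * star (if b = p then Complex.I else 1) *
       (if c = p then Complex.I else 1) * star (if d = p then Complex.I else 1)) with hwdef
  have h2 : (1 - w) * Iv μ C0 a b c d = 0 := by
    linear_combination h
  rcases mul_eq_zero.mp h2 with h3 | h3
  · exact absurd (by linear_combination -h3 : w = 1) hw
  · exact h3

lemma sum_pair_support {f : Fin N → ℂ} {p q : Fin N} (hpq : p ≠ q)
    (h : ∀ j, j ≠ p → j ≠ q → f j = 0) : ∑ j, f j = f p + f q := by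
  rw [← Finset.sum_pair hpq]
  refine (Finset.sum_subset (Finset.subset_univ _) fun x _ hx => ?_).symm
  simp only [Finset.mem_insert, Finset.mem_singleton, not_or] at hx
  exact h x hx.1 hx.2

lemma Iv_relation (μ : Measure (Matrix.unitaryGroup (Fin N) ℂ)) [IsProbabilityMeasure μ]
    (hinv : ∀ V : Matrix.unitaryGroup (Fin N) ℂ, Measure.map (fun U => V * U) μ = μ)
    (C0 : Matrix (Fin N) (Fin N) ℂ) (u v : Fin N) (huv : u ≠ v) :
    Iv μ C0 u u u u = Iv μ C0 u v v u + Iv μ C0 u u v v := by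
  classical
  set r : ℂ := ((Real.sqrt 2 : ℝ) : ℂ)⁻¹ with hrdef
  have hrs : star r = r := by
    simp [hrdef, ← Complex.conj_inv, Complex.conj_ofReal]
  have hr2 : r * r = 1 / 2 := by
    rw [hrdef, ← mul_inv]
    norm_cast
    rw [Real.mul_self_sqrt (by norm_num : (0:ℝ) ≤ 2)]
    norm_num
  set R : Matrix (Fin N) (Fin N) ℂ := Matrix.of (fun i j =>
    if i = u then (if j = u then r else if j = v then r else 0)
    else if i = v then (if j = u then -r else if j = v then r else 0)
    else if i = j then 1 else 0) with hR
  have hRapp : ∀ i j, R i j =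
      (if i = u then (if j = u then r else if j = v then r else 0)
      else if i = v then (if j = u then -r else if j = v then r else 0)
      else if i = j then 1 else 0) := fun i j => rfl
  have hrow_u : ∀ j, R u j = if j = u then r else if j = v then r else 0 := by
    intro j; rw [hRapp]; simp
  have hrow_v : ∀ j, R v j = if j = u then -r else if j = v then r else 0 := by
    intro j; rw [hRapp]; simp [Ne.symm huv]
  have hrow_o : ∀ i, i ≠ u → i ≠ v → ∀ j, R i j = if i = j then 1 else 0 := by
    intro i hiu hiv j; rw [hRapp]; simp [hiu, hiv]
  have hmem : R ∈ Matrix.unitaryGroup (Fin N) ℂ := by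
    rw [Matrix.mem_unitaryGroup_iff]
    ext i k
    rw [Matrix.mul_apply]
    simp only [Matrix.star_apply]
    by_cases hiu : i = u
    · rw [hiu]
      rw [sum_pair_support huv (fun j hj1 hj2 => by
        rw [hrow_u j, if_neg hj1, if_neg hj2, zero_mul])]
      rw [hrow_u u, if_pos rfl, hrow_u v, if_neg (Ne.symm huv), if_pos rfl]
      by_cases hku : k = u
      · rw [hku, hrow_u u, if_pos rfl, hrow_u v, if_neg (Ne.symm huv), if_pos rfl, hrs,
          Matrix.one_apply_eq]
        linear_combination 2 * hr2
      · by_cases hkv : k = v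
        · rw [hkv, hrow_v u, if_pos rfl, hrow_v v, if_neg (Ne.symm huv), if_pos rfl,
            star_neg, hrs, Matrix.one_apply_ne huv]
          ring
        · rw [hrow_o k hku hkv u, if_neg hku, hrow_o k hku hkv v,
            if_neg hkv, Matrix.one_apply_ne (fun h => hku h.symm)]
          simp
    · by_cases hiv : i = v
      · rw [hiv]
        rw [sum_pair_support huv (fun j hj1 hj2 => by
          rw [hrow_v j, if_neg hj1, if_neg hj2, zero_mul])]
        rw [hrow_v u, if_pos rfl, hrow_v v, if_neg (Ne.symm huv), if_pos rfl]
        by_cases hku : k = u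
        · rw [hku, hrow_u u, if_pos rfl, hrow_u v, if_neg (Ne.symm huv), if_pos rfl, hrs,
            Matrix.one_apply_ne (Ne.symm huv)]
          ring
        · by_cases hkv : k = v
          · rw [hkv, hrow_v u, if_pos rfl, hrow_v v, if_neg (Ne.symm huv), if_pos rfl,
              star_neg, hrs, Matrix.one_apply_eq]
            linear_combination 2 * hr2
          · rw [hrow_o k hku hkv u, if_neg hku, hrow_o k hku hkv v, if_neg hkv,
              Matrix.one_apply_ne (fun h => hkv h.symm)]
            simp
      · rw [Finset.sum_eq_single i (fun j _ hj => by
          rw [hrow_o i hiu hiv j, if_neg (fun h => hj h.symm), zero_mul])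
          (fun hi => absurd (Finset.mem_univ i) hi)]
        rw [hrow_o i hiu hiv i, if_pos rfl, one_mul]
        by_cases hku : k = u
        · rw [hku, hrow_u i, if_neg hiu, if_neg hiv, star_zero, Matrix.one_apply_ne hiu]
        · by_cases hkv : k = v
          · rw [hkv, hrow_v i, if_neg hiu, if_neg hiv, star_zero, Matrix.one_apply_ne hiv]
          · rw [hrow_o k hku hkv i]
            by_cases hik : i = k
            · rw [hik, if_pos rfl, star_one, Matrix.one_apply_eq]
            · rw [if_neg (fun h => hik h.symm), star_zero, Matrix.one_apply_ne hik]
  have hconj : ∀ Y : Matrix (Fin N) (Fin N) ℂ,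
      (R * Y * Rᴴ) u u = (1/2 : ℂ) * (Y u u + Y u v + Y v u + Y v v) := by
    intro Y
    rw [Matrix.mul_apply]
    simp only [Matrix.conjTranspose_apply]
    have hRY : ∀ a, (R * Y) u a = r * Y u a + r * Y v a := by
      intro a
      rw [Matrix.mul_apply]
      rw [sum_pair_support huv (fun j hj1 hj2 => by
        rw [hrow_u j, if_neg hj1, if_neg hj2, zero_mul])]
      rw [hrow_u u, if_pos rfl, hrow_u v, if_neg (Ne.symm huv), if_pos rfl]
    rw [sum_pair_support huv (fun k hk1 hk2 => by
      rw [hrow_u k, if_neg hk1, if_neg hk2, star_zero, mul_zero])]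
    rw [hRY u, hRY v, hrow_u u, if_pos rfl, hrow_u v, if_neg (Ne.symm huv), if_pos rfl, hrs]
    linear_combination (Y u u + Y u v + Y v u + Y v v) * hr2
  set V : Matrix.unitaryGroup (Fin N) ℂ := ⟨R, hmem⟩ with hV
  set g : Fin 2 → Fin N := ![u, v] with hg
  have hIv : ∀ a b c d : Fin N,
      (∫ U, X C0 U a b * X C0 U c d ∂μ) = Iv μ C0 a b c d := fun _ _ _ _ => rfl
  have E := Iv_inv μ hinv C0 V u u u u
  have hint : (fun U : Matrix.unitaryGroup (Fin N) ℂ =>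
      ((V : Matrix (Fin N) (Fin N) ℂ) * X C0 U * (V : Matrix (Fin N) (Fin N) ℂ)ᴴ) u u *
      ((V : Matrix (Fin N) (Fin N) ℂ) * X C0 U * (V : Matrix (Fin N) (Fin N) ℂ)ᴴ) u u) =
      fun U => ∑ s : (Fin 2 × Fin 2) × (Fin 2 × Fin 2),
        (1/4 : ℂ) * (X C0 U (g s.1.1) (g s.1.2) * X C0 U (g s.2.1) (g s.2.2)) := by
    funext U
    rw [show ((V : Matrix (Fin N) (Fin N) ℂ)) = R from rfl, hconj (X C0 U)]
    simp only [Fintype.sum_prod_type, Fin.sum_univ_two, hg, Matrix.cons_val_zero,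
      Matrix.cons_val_one, Matrix.head_cons]
    ring
  rw [hint] at E
  rw [integral_finset_sum _ (fun s _ => ((integrable_prod μ C0 _ _ _ _).const_mul _))] at E
  simp only [integral_const_mul] at E
  simp only [Fintype.sum_prod_type, Fin.sum_univ_two, hg, Matrix.cons_val_zero,
    Matrix.cons_val_one, Matrix.head_cons] at E
  simp only [hIv] at E
  have hp1 : Iv μ C0 u u u u = Iv μ C0 v v v v := by
    simpa [Equiv.swap_apply_left] using Iv_perm μ hinv C0 (Equiv.swap u v) u u u u
  have hp2 : Iv μ C0 u u v v = Iv μ C0 v v u u := by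
    simpa [Equiv.swap_apply_left, Equiv.swap_apply_right] using
      Iv_perm μ hinv C0 (Equiv.swap u v) u u v v
  have hp3 : Iv μ C0 u v v u = Iv μ C0 v u u v := by
    simpa [Equiv.swap_apply_left, Equiv.swap_apply_right] using
      Iv_perm μ hinv C0 (Equiv.swap u v) u v v u
  have hz : ∀ a b c d : Fin N,
      ((if a = v then Complex.I else 1) * star (if b = v then Complex.I else 1) *
       (if c = v then Complex.I else 1) * star (if d = v then Complex.I else 1)) ≠ 1 →
      Iv μ C0 a b c d = 0 := fun a b c d h => Iv_zero μ hinv C0 v a b c d h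
  have hz1 : Iv μ C0 u u u v = 0 := hz u u u v (by
    simp [huv, Complex.ext_iff])
  have hz2 : Iv μ C0 u u v u = 0 := hz u u v u (by simp [huv, Complex.ext_iff])
  have hz3 : Iv μ C0 u v u u = 0 := hz u v u u (by simp [huv, Complex.ext_iff])
  have hz4 : Iv μ C0 u v v v = 0 := hz u v v v (by simp [huv, Complex.ext_iff])
  have hz5 : Iv μ C0 v u u u = 0 := hz v u u u (by simp [huv, Complex.ext_iff])
  have hz6 : Iv μ C0 v u v v = 0 := hz v u v v (by simp [huv, Complex.ext_iff])
  have hz7 : Iv μ C0 v v u v = 0 := hz v v u v (by simp [huv, Complex.ext_iff])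
  have hz8 : Iv μ C0 v v v u = 0 := hz v v v u (by simp [huv, Complex.ext_iff])
  have hz9 : Iv μ C0 u v u v = 0 := hz u v u v (by simp [huv, Complex.ext_iff]; norm_num)
  have hz10 : Iv μ C0 v u v u = 0 := hz v u v u (by simp [huv, Complex.ext_iff]; norm_num)
  linear_combination 2*E - (1/2)*hp1 - (1/2)*hp2 - (1/2)*hp3 +
    (1/2)*(hz1 + hz2 + hz3 + hz4 + hz5 + hz6 + hz7 + hz8 + hz9 + hz10)

lemma exists_perm {z o i j : Fin N} (hzo : z ≠ o) (hij : i ≠ j) :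
    ∃ σ : Equiv.Perm (Fin N), σ z = i ∧ σ o = j := by
  classical
  refine ⟨(Equiv.swap o ((Equiv.swap z i) j)).trans (Equiv.swap z i), ?_, ?_⟩
  · have hwz : (Equiv.swap z i) j ≠ z := by
      intro h
      have : j = i := by
        have := congrArg (Equiv.swap z i) h
        rwa [Equiv.swap_apply_self, Equiv.swap_apply_left] at this
      exact hij this.symm
    rw [Equiv.trans_apply, Equiv.swap_apply_of_ne_of_ne hzo (Ne.symm hwz),
      Equiv.swap_apply_left]
  · rw [Equiv.trans_apply, Equiv.swap_apply_left, Equiv.swap_apply_self]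

lemma trace_sq {K : ℕ} (M : Matrix (Fin K) (Fin K) ℂ) :
    (M^2).trace = ∑ p : Fin K × Fin K, M p.1 p.2 * M p.2 p.1 := by
  rw [pow_two, Matrix.trace]
  simp only [Fintype.sum_prod_type, Matrix.diag, Matrix.mul_apply]

lemma sum_diag_split {K : ℕ} (x y : ℂ) :
    ∑ p : Fin K × Fin K, (if p.1 = p.2 then x else y) =
      (K : ℂ) * x + ((K : ℂ)^2 - K) * y := by
  classical
  have h1 : ∀ p : Fin K × Fin K, (if p.1 = p.2 then x else y) =
      y + (if p.1 = p.2 then x - y else 0) := by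
    intro p; by_cases h : p.1 = p.2 <;> simp [h]
  rw [Finset.sum_congr rfl fun p _ => h1 p, Finset.sum_add_distrib, Finset.sum_const]
  rw [Fintype.sum_prod_type]
  have h2 : ∀ i : Fin K, (∑ j : Fin K, if i = j then x - y else 0) = x - y := by
    intro i; rw [Finset.sum_ite_eq]; simp
  rw [Finset.sum_congr rfl fun i _ => h2 i, Finset.sum_const]
  simp [Finset.card_univ, nsmul_eq_mul]
  ring

end S2aux

open S2aux

/-- `∫ dU Tr[(Π_A U C₀ U† Π_A†)²] = αN_A² + βN_A` with
`α = (Nm-m²)/(N(N²-1))`, `β = (Nm²-m)/(N(N²-1))`, for Haar measure on `U(N)`. -/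
theorem statement2 (N NA m : ℕ) (hN : 2 ≤ N) (hNA1 : 1 ≤ NA) (hNAN : NA ≤ N) (hm : m ≤ N)
    (μ : Measure (Matrix.unitaryGroup (Fin N) ℂ)) [IsProbabilityMeasure μ]
    (hinv : ∀ V : Matrix.unitaryGroup (Fin N) ℂ,
      Measure.map (fun U => V * U) μ = μ)
    (C0 : Matrix (Fin N) (Fin N) ℂ) (hherm : C0ᴴ = C0) (hproj : C0 * C0 = C0)
    (htr : C0.trace = (m : ℂ)) :
    (∫ U : Matrix.unitaryGroup (Fin N) ℂ,
        ((projA NA N * (U : Matrix (Fin N) (Fin N) ℂ) * C0 *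
            (U : Matrix (Fin N) (Fin N) ℂ)ᴴ * (projA NA N)ᴴ)^2).trace ∂μ)
      = (((N : ℂ) * m - (m : ℂ)^2) / ((N : ℂ) * ((N : ℂ)^2 - 1))) * (NA : ℂ)^2 +
        (((N : ℂ) * m^2 - (m : ℂ)) / ((N : ℂ) * ((N : ℂ)^2 - 1))) * (NA : ℂ) := by
  classical
  set z : Fin N := ⟨0, by omega⟩ with hz
  set o : Fin N := ⟨1, by omega⟩ with ho
  have hzo : z ≠ o := fun h => Nat.zero_ne_one (congrArg Fin.val h)
  set e : Fin NA → Fin N := Fin.castLE hNAN with he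
  have hein : Function.Injective e := Fin.castLE_injective hNAN
  set α := Iv μ C0 z z z z with hα
  set β := Iv μ C0 z o o z with hβ
  set γ := Iv μ C0 z z o o with hγ
  -- unitarity facts
  have hUU : ∀ U : Matrix.unitaryGroup (Fin N) ℂ,
      (U : Matrix (Fin N) (Fin N) ℂ)ᴴ * (U : Matrix (Fin N) (Fin N) ℂ) = 1 := by
    intro U
    have := U.2
    rw [Matrix.mem_unitaryGroup_iff'] at this
    simpa [Matrix.star_eq_conjTranspose] using this
  -- trace of X is m
  have htrX : ∀ U : Matrix.unitaryGroup (Fin N) ℂ, (X C0 U).trace = (m : ℂ) := by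
    intro U
    rw [show X C0 U = (U : Matrix (Fin N) (Fin N) ℂ) * C0 * (U : Matrix (Fin N) (Fin N) ℂ)ᴴ
      from rfl]
    rw [Matrix.trace_mul_cycle, hUU U, Matrix.one_mul, htr]
  -- X is idempotent
  have hXX : ∀ U : Matrix.unitaryGroup (Fin N) ℂ, X C0 U * X C0 U = X C0 U := by
    intro U
    show ((U : Matrix (Fin N) (Fin N) ℂ) * C0 * (U : Matrix (Fin N) (Fin N) ℂ)ᴴ) *
      ((U : Matrix (Fin N) (Fin N) ℂ) * C0 * (U : Matrix (Fin N) (Fin N) ℂ)ᴴ) = _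
    have h1 : (U : Matrix (Fin N) (Fin N) ℂ)ᴴ *
        ((U : Matrix (Fin N) (Fin N) ℂ) * (C0 * (U : Matrix (Fin N) (Fin N) ℂ)ᴴ)) =
        C0 * (U : Matrix (Fin N) (Fin N) ℂ)ᴴ := by
      rw [← Matrix.mul_assoc, hUU U, Matrix.one_mul]
    simp only [Matrix.mul_assoc]
    rw [h1, ← Matrix.mul_assoc C0 C0, hproj, ← Matrix.mul_assoc]
    rfl
  -- classification of Iv values
  have hA : ∀ i : Fin N, Iv μ C0 i i i i = α := by
    intro i
    have := Iv_perm μ hinv C0 (Equiv.swap z i) z z z z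
    simpa [Equiv.swap_apply_left] using this.symm
  have hB : ∀ i j : Fin N, i ≠ j → Iv μ C0 i j j i = β := by
    intro i j hij
    obtain ⟨σ, h1, h2⟩ := exists_perm hzo hij
    have := Iv_perm μ hinv C0 σ z o o z
    rw [h1, h2] at this
    exact this.symm
  have hC : ∀ i j : Fin N, i ≠ j → Iv μ C0 i i j j = γ := by
    intro i j hij
    obtain ⟨σ, h1, h2⟩ := exists_perm hzo hij
    have := Iv_perm μ hinv C0 σ z z o o
    rw [h1, h2] at this
    exact this.symm
  -- equation F3 : N α + (N²-N) γ = m²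
  have hsum3 : ((N : ℂ)) * α + ((N : ℂ)^2 - N) * γ = (m : ℂ)^2 := by
    have hpt : ∀ U : Matrix.unitaryGroup (Fin N) ℂ,
        ∑ p : Fin N × Fin N, X C0 U p.1 p.1 * X C0 U p.2 p.2 = (m : ℂ)^2 := by
      intro U
      simp only [Fintype.sum_prod_type]
      rw [← Finset.sum_mul_sum]
      have := htrX U
      rw [Matrix.trace] at this
      simp only [Matrix.diag] at this
      rw [this]
      ring
    have hsum : ∑ p : Fin N × Fin N, Iv μ C0 p.1 p.1 p.2 p.2 = (m : ℂ)^2 := by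
      show (∑ p : Fin N × Fin N, ∫ U, X C0 U p.1 p.1 * X C0 U p.2 p.2 ∂μ) = _
      rw [← integral_finset_sum _ (fun p _ => integrable_prod μ C0 p.1 p.1 p.2 p.2)]
      rw [show (fun U : Matrix.unitaryGroup (Fin N) ℂ =>
        ∑ p : Fin N × Fin N, X C0 U p.1 p.1 * X C0 U p.2 p.2) = fun _ => (m:ℂ)^2 from
        funext fun U => hpt U]
      simp
    rw [← hsum, Finset.sum_congr rfl (fun p _ => ?_), sum_diag_split α γ]
    by_cases h : p.1 = p.2
    · rw [if_pos h, h]; exact hA p.2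
    · rw [if_neg h]; exact hC p.1 p.2 h
  -- equation F4 : N α + (N²-N) β = m
  have hsum4 : ((N : ℂ)) * α + ((N : ℂ)^2 - N) * β = (m : ℂ) := by
    have hpt : ∀ U : Matrix.unitaryGroup (Fin N) ℂ,
        ∑ p : Fin N × Fin N, X C0 U p.1 p.2 * X C0 U p.2 p.1 = (m : ℂ) := by
      intro U
      have h1 : ∑ p : Fin N × Fin N, X C0 U p.1 p.2 * X C0 U p.2 p.1 =
          (X C0 U * X C0 U).trace := by
        rw [Matrix.trace]
        simp only [Fintype.sum_prod_type, Matrix.diag, Matrix.mul_apply]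
      rw [h1, hXX U, htrX U]
    have hsum : ∑ p : Fin N × Fin N, Iv μ C0 p.1 p.2 p.2 p.1 = (m : ℂ) := by
      show (∑ p : Fin N × Fin N, ∫ U, X C0 U p.1 p.2 * X C0 U p.2 p.1 ∂μ) = _
      rw [← integral_finset_sum _ (fun p _ => integrable_prod μ C0 p.1 p.2 p.2 p.1)]
      rw [show (fun U : Matrix.unitaryGroup (Fin N) ℂ =>
        ∑ p : Fin N × Fin N, X C0 U p.1 p.2 * X C0 U p.2 p.1) = fun _ => (m:ℂ) from
        funext fun U => hpt U]
      simp
    rw [← hsum, Finset.sum_congr rfl (fun p _ => ?_), sum_diag_split α β]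
    by_cases h : p.1 = p.2
    · rw [if_pos h, h]; exact hA p.2
    · rw [if_neg h]; exact hB p.1 p.2 h
  -- rotation relation
  have hrel : α = β + γ := Iv_relation μ hinv C0 z o hzo
  -- LHS computation
  have hM : ∀ (U : Matrix.unitaryGroup (Fin N) ℂ) (i j : Fin NA),
      (projA NA N * (U : Matrix (Fin N) (Fin N) ℂ) * C0 *
        (U : Matrix (Fin N) (Fin N) ℂ)ᴴ * (projA NA N)ᴴ) i j = X C0 U (e i) (e j) := by
    intro U i j
    have h0 : projA NA N * (U : Matrix (Fin N) (Fin N) ℂ) * C0 *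
        (U : Matrix (Fin N) (Fin N) ℂ)ᴴ * (projA NA N)ᴴ =
        projA NA N * X C0 U * (projA NA N)ᴴ := by
      show _ = projA NA N * ((U : Matrix (Fin N) (Fin N) ℂ) * C0 *
        (U : Matrix (Fin N) (Fin N) ℂ)ᴴ) * (projA NA N)ᴴ
      simp only [Matrix.mul_assoc]
    rw [h0]
    have hproj_app : ∀ (k : Fin NA) (q : Fin N), projA NA N k q =
        if q = e k then 1 else 0 := by
      intro k q
      show (if (k : ℕ) = (q : ℕ) then (1:ℂ) else 0) = _
      by_cases h : q = e k
      · rw [if_pos h, if_pos]; rw [h]; simp [he]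
      · rw [if_neg h, if_neg]
        intro hc
        exact h (Fin.ext (by simp [he, ← hc]))
    rw [Matrix.mul_apply]
    simp only [Matrix.conjTranspose_apply]
    rw [Finset.sum_eq_single (e j)
      (fun q _ hq => by rw [hproj_app j q, if_neg hq, star_zero, mul_zero])
      (fun h => absurd (Finset.mem_univ _) h)]
    rw [hproj_app j (e j), if_pos rfl, star_one, mul_one, Matrix.mul_apply]
    rw [Finset.sum_eq_single (e i)
      (fun q _ hq => by rw [hproj_app i q, if_neg hq, zero_mul])
      (fun h => absurd (Finset.mem_univ _) h)]
    rw [hproj_app i (e i), if_pos rfl, one_mul]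
  have hLHS : (∫ U : Matrix.unitaryGroup (Fin N) ℂ,
        ((projA NA N * (U : Matrix (Fin N) (Fin N) ℂ) * C0 *
            (U : Matrix (Fin N) (Fin N) ℂ)ᴴ * (projA NA N)ᴴ)^2).trace ∂μ)
      = (NA : ℂ) * α + ((NA : ℂ)^2 - NA) * β := by
    have hpt : ∀ U : Matrix.unitaryGroup (Fin N) ℂ,
        ((projA NA N * (U : Matrix (Fin N) (Fin N) ℂ) * C0 *
            (U : Matrix (Fin N) (Fin N) ℂ)ᴴ * (projA NA N)ᴴ)^2).trace =
        ∑ p : Fin NA × Fin NA, X C0 U (e p.1) (e p.2) * X C0 U (e p.2) (e p.1) := by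
      intro U
      rw [trace_sq]
      exact Finset.sum_congr rfl fun p _ => by rw [hM U p.1 p.2, hM U p.2 p.1]
    have hic := integral_congr_ae (μ := μ)
      (g := fun U : Matrix.unitaryGroup (Fin N) ℂ =>
        ∑ p : Fin NA × Fin NA, X C0 U (e p.1) (e p.2) * X C0 U (e p.2) (e p.1))
      (Filter.Eventually.of_forall fun U => hpt U)
    rw [hic]
    rw [integral_finset_sum _ (fun p _ => integrable_prod μ C0 (e p.1) (e p.2) (e p.2) (e p.1))]
    have : ∀ p : Fin NA × Fin NA,
        (∫ U, X C0 U (e p.1) (e p.2) * X C0 U (e p.2) (e p.1) ∂μ) =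
        (if p.1 = p.2 then α else β) := by
      intro p
      by_cases h : p.1 = p.2
      · rw [if_pos h, h]; exact hA (e p.2)
      · rw [if_neg h]; exact hB (e p.1) (e p.2) (fun hc => h (hein hc))
    rw [Finset.sum_congr rfl fun p _ => this p, sum_diag_split α β]
  rw [hLHS]
  -- final algebra
  have hN0 : (N : ℂ) ≠ 0 := Nat.cast_ne_zero.mpr (by omega)
  have hN1 : (N : ℂ)^2 - 1 ≠ 0 := by
    intro h
    have h2 : ((N*N : ℕ) : ℂ) = ((1 : ℕ) : ℂ) := by push_cast; linear_combination h
    have h3 : N * N = 1 := Nat.cast_injective (R := ℂ) h2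
    nlinarith [h3, hN]
  have hd : (N : ℂ) * ((N : ℂ)^2 - 1) ≠ 0 := mul_ne_zero hN0 hN1
  have hbv : β * ((N : ℂ) * ((N : ℂ)^2 - 1)) = (N : ℂ) * m - (m : ℂ)^2 := by
    linear_combination (N : ℂ) * hsum4 - hsum3 - ((N:ℂ)^2 - N) * hrel
  have hgv : γ * ((N : ℂ) * ((N : ℂ)^2 - 1)) = (N : ℂ) * m^2 - (m : ℂ) := by
    linear_combination (N : ℂ) * hsum3 - hsum4 - ((N:ℂ)^2 - N) * hrel
  rw [div_mul_eq_mul_div, div_mul_eq_mul_div, ← add_div, eq_div_iff hd]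
  linear_combination (NA : ℂ) * ((N : ℂ) * ((N : ℂ)^2 - 1)) * hrel +
    (NA : ℂ)^2 * hbv + (NA : ℂ) * hgv
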